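/- Let T be a simple tile of a periodic solution with temporal period τ and spatial period σ. Then there exists a positive integer d dividing gcd(τ, σ) such that s(T) = τσ/d and every state appearing in T appears in exactly d of the τ rows of T and in exactly d of the σ columns of T. -/

import Mathlib

open Filter

/-- An `n`-state 2-neighbor cellular automaton rule. -/
abbrev CARule (n : ℕ) := Fin n → Fin n → Fin n

/-- One step of the CA evolution: `ξ_{t+1}(x) = f(ξ_t(x-1), ξ_t(x))`. -/
def caStep {n : ℕ} (f : CARule n) (ξ : ℤ → Fin n) : ℤ → Fin n :=
  fun x => f (ξ (x - 1)) (ξ x)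

/-- The trajectory of an initial configuration under the rule `f`. -/
def caTraj {n : ℕ} (f : CARule n) (ξ : ℤ → Fin n) : ℕ → ℤ → Fin n
  | 0 => ξ
  | t + 1 => caStep f (caTraj f ξ t)

/-- `ξ` is (the initial configuration of) a periodic solution of `f` with
minimal temporal period `τ` and minimal spatial period `σ`. -/
def IsPS {n : ℕ} (f : CARule n) (ξ : ℤ → Fin n) (τ σ : ℕ) : Prop :=
  0 < τ ∧ 0 < σ ∧
  (∀ x : ℤ, ξ (x + (σ : ℤ)) = ξ x) ∧
  (∀ σ' : ℕ, 0 < σ' → (∀ x : ℤ, ξ (x + (σ' : ℤ)) = ξ x) → σ ≤ σ') ∧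
  caTraj f ξ τ = ξ ∧
  (∀ τ' : ℕ, 0 < τ' → caTraj f ξ τ' = ξ → τ ≤ τ')

/-- `η` is a proper initial configuration for the periodic solution `ξ`:
it agrees with `ξ` at all sites `≤ y` for some `y`. -/
def IsProper {n : ℕ} (ξ η : ℤ → Fin n) : Prop :=
  ∃ y : ℤ, ∀ x ≤ y, η x = ξ x

/-- The periodic solution `ξ` of `f` is weakly robust: the expansion velocity is
positive, i.e. there is `v > 0` such that for every proper initial configuration
`η`, eventually (in `t`) the two trajectories agree at all sites `x ≤ v·t`
(equivalently, `inf_η liminf_t s_t(η)/t > 0`). -/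
def IsWeaklyRobust {n : ℕ} (f : CARule n) (ξ : ℤ → Fin n) : Prop :=
  ∃ v : ℝ, 0 < v ∧ ∀ η : ℤ → Fin n, IsProper ξ η →
    ∀ᶠ t : ℕ in atTop, ∀ x : ℤ, (x : ℝ) ≤ v * t → caTraj f η t x = caTraj f ξ t x

/-- The label (τ-periodic sequence) `A` right-extends to `B` under `f`: `A → B`. -/
def RightExtends {n : ℕ} (f : CARule n) (A B : ℕ → Fin n) : Prop :=
  ∀ i : ℕ, f (A i) (B i) = B (i + 1)

/-- The sequence `c_{j+1} = f(a_j, c_j)` started at `c₀`. -/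
def chaseSeq {n : ℕ} (f : CARule n) (A : ℕ → Fin n) (c₀ : Fin n) : ℕ → Fin n
  | 0 => c₀
  | j + 1 => f (A j) (chaseSeq f A c₀ j)

/-- The label `A` decides `B` under `f`: `A ⇒ B`. -/
def Decides {n : ℕ} (f : CARule n) (A B : ℕ → Fin n) : Prop :=
  RightExtends f A B ∧ ∀ c₀ : Fin n, ∃ j : ℕ, chaseSeq f A c₀ j = B j

/-- `T` is a (τ,σ)-periodic array (row index mod τ, column index mod σ). -/
def IsTilePeriodic {n : ℕ} (τ σ : ℕ) (T : ℕ → ℕ → Fin n) : Prop :=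
  (∀ i j, T (i + τ) j = T i j) ∧ (∀ i j, T i (j + σ) = T i j)

/-- The set of states appearing in the tile `T`. -/
def tileStates (n τ σ : ℕ) (T : ℕ → ℕ → Fin n) : Finset (Fin n) :=
  (Finset.range τ ×ˢ Finset.range σ).image fun p => T p.1 p.2

/-- The set of horizontally adjacent pairs appearing in the tile `T`. -/
def tilePairs (n τ σ : ℕ) (T : ℕ → ℕ → Fin n) : Finset (Fin n × Fin n) :=
  (Finset.range τ ×ˢ Finset.range σ).image fun p => (T p.1 p.2, T p.1 (p.2 + 1))

/-- `T` is a tile of a periodic solution: uniqueness of assignment, each row has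
minimal period `σ`, and the cyclic sequence of rows has minimal period `τ`. -/
def IsPSTile (n τ σ : ℕ) (T : ℕ → ℕ → Fin n) : Prop :=
  IsTilePeriodic τ σ T ∧
  (∀ i j k m, T i j = T k m → T i (j + 1) = T k (m + 1) →
      T (i + 1) (j + 1) = T (k + 1) (m + 1)) ∧
  (∀ i : ℕ, ∀ σ' : ℕ, 0 < σ' → (∀ j, T i (j + σ') = T i j) → σ ≤ σ') ∧
  (∀ τ' : ℕ, 0 < τ' → (∀ i j, T (i + τ') j = T i j) → τ ≤ τ')

/-- `T` is a tile of a periodic solution of the given rule `f`. -/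
def IsPSTileOf {n : ℕ} (f : CARule n) (τ σ : ℕ) (T : ℕ → ℕ → Fin n) : Prop :=
  IsTilePeriodic τ σ T ∧
  (∀ i j, f (T i j) (T i (j + 1)) = T (i + 1) (j + 1)) ∧
  (∀ i : ℕ, ∀ σ' : ℕ, 0 < σ' → (∀ j, T i (j + σ') = T i j) → σ ≤ σ') ∧
  (∀ τ' : ℕ, 0 < τ' → (∀ i j, T (i + τ') j = T i j) → τ ≤ τ')

/-- `T` is simple: the assignment number `p(T)` equals the number of states `s(T)`. -/
def IsSimpleTile (n τ σ : ℕ) (T : ℕ → ℕ → Fin n) : Prop :=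
  (tilePairs n τ σ T).card = (tileStates n τ σ T).card

/-- The rank of a tile: the largest `x` such that some `x` columns of `T`
together contain `x * τ` pairwise distinct states. -/
noncomputable def tileRank (n τ σ : ℕ) (T : ℕ → ℕ → Fin n) : ℕ :=
  sSup {x : ℕ | ∃ J : Finset ℕ, J ⊆ Finset.range σ ∧ J.card = x ∧
    ((J ×ˢ Finset.range τ).image fun p => T p.2 p.1).card = x * τ}

/-- The tile of the periodic solution `ξ` of `f`: `a_{i,j} = ξ_i(j)`. -/
def psTile {n : ℕ} (f : CARule n) (ξ : ℤ → Fin n) : ℕ → ℕ → Fin n :=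
  fun i j => caTraj f ξ i (j : ℤ)

/-- `(a,b)` is a global period of `T`. -/
def TilePer {n : ℕ} (T : ℕ → ℕ → Fin n) (a b : ℕ) : Prop :=
  ∀ u v, T (u + a) (v + b) = T u v

namespace TilePerAux

variable {n τ σ : ℕ} {T : ℕ → ℕ → Fin n}

theorem per_add {a b a' b' : ℕ} (h : TilePer T a b) (h' : TilePer T a' b') :
    TilePer T (a + a') (b + b') := by
  intro u v
  calc T (u + (a + a')) (v + (b + b')) = T (u + a' + a) (v + b' + b) := by ring_nf
    _ = T (u + a') (v + b') := h _ _
    _ = T u v := h' u v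

theorem per_nsmul {a b : ℕ} (h : TilePer T a b) : ∀ k, TilePer T (k * a) (k * b) := by
  intro k
  induction k with
  | zero => intro u v; simp
  | succ k ih =>
      have := per_add ih h
      simpa [Nat.succ_mul] using this

theorem perV (hper : IsTilePeriodic τ σ T) (k i j : ℕ) : T (i + k * τ) j = T i j := by
  induction k with
  | zero => simp
  | succ k ih =>
      calc T (i + (k+1) * τ) j = T (i + k * τ + τ) j := by ring_nf
        _ = T (i + k * τ) j := hper.1 _ _
        _ = T i j := ih

theorem perH (hper : IsTilePeriodic τ σ T) (k i j : ℕ) : T i (j + k * σ) = T i j := by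
  induction k with
  | zero => simp
  | succ k ih =>
      calc T i (j + (k+1) * σ) = T i (j + k * σ + σ) := by ring_nf
        _ = T i (j + k * σ) := hper.2 _ _
        _ = T i j := ih

theorem tmod (hper : IsTilePeriodic τ σ T) (i j : ℕ) : T i j = T (i % τ) (j % σ) := by
  conv_lhs => rw [← Nat.mod_add_div' i τ, ← Nat.mod_add_div' j σ]
  exact (perV hper _ _ _).trans (perH hper _ _ _)

theorem per_mod (hper : IsTilePeriodic τ σ T) {a b : ℕ} (h : TilePer T a b) :
    TilePer T (a % τ) (b % σ) := by
  intro u v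
  calc T (u + a % τ) (v + b % σ)
      = T (u + a % τ + a / τ * τ) (v + b % σ + b / σ * σ) := by
        rw [perV hper, perH hper]
    _ = T (u + a) (v + b) := by rw [add_assoc, add_assoc, Nat.mod_add_div', Nat.mod_add_div']
    _ = T u v := h u v

theorem per_of_mod (hper : IsTilePeriodic τ σ T) {a b : ℕ}
    (h : TilePer T (a % τ) (b % σ)) : TilePer T a b := by
  intro u v
  calc T (u + a) (v + b)
      = T (u + a % τ + a / τ * τ) (v + b % σ + b / σ * σ) := by
        rw [add_assoc, add_assoc, Nat.mod_add_div', Nat.mod_add_div']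
    _ = T (u + a % τ) (v + b % σ) := by rw [perV hper, perH hper]
    _ = T u v := h u v

theorem per_congr (hper : IsTilePeriodic τ σ T) {a b a' b' : ℕ}
    (h1 : (a : ZMod τ) = (a' : ZMod τ)) (h2 : (b : ZMod σ) = (b' : ZMod σ))
    (h : TilePer T a b) : TilePer T a' b' := by
  have e1 : a % τ = a' % τ := (ZMod.natCast_eq_natCast_iff _ _ _).mp h1
  have e2 : b % σ = b' % σ := (ZMod.natCast_eq_natCast_iff _ _ _).mp h2
  have h3 := per_mod hper h
  rw [e1, e2] at h3
  exact per_of_mod hper h3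

end TilePerAux

open TilePerAux in
def perLat (τ σ : ℕ) [NeZero τ] [NeZero σ] {n : ℕ} (T : ℕ → ℕ → Fin n)
    (hper : IsTilePeriodic τ σ T) : AddSubgroup (ZMod τ × ZMod σ) where
  carrier := {p | TilePer T p.1.val p.2.val}
  zero_mem' := by intro u v; simp [ZMod.val_zero]
  add_mem' := by
    intro p q hp hq
    have h := per_add hp hq
    refine per_congr hper ?_ ?_ h <;>
      simp [ZMod.natCast_zmod_val, ZMod.val_add, ZMod.natCast_mod, Nat.cast_add]
  neg_mem' := by
    intro p hp
    have h := per_nsmul hp (τ * σ - 1)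
    have hτσ : (1:ℕ) ≤ τ * σ := Nat.one_le_iff_ne_zero.mpr
      (Nat.mul_ne_zero (NeZero.ne τ) (NeZero.ne σ))
    refine per_congr hper ?_ ?_ h
    · push_cast [ZMod.natCast_zmod_val]
      rw [Nat.cast_sub hτσ]
      push_cast
      rw [ZMod.natCast_self]
      ring_nf
      simp
    · push_cast [ZMod.natCast_zmod_val]
      rw [Nat.cast_sub hτσ]
      push_cast
      rw [ZMod.natCast_self]
      ring_nf
      simp

theorem mem_perLat_iff (τ σ : ℕ) [NeZero τ] [NeZero σ] {n : ℕ} (T : ℕ → ℕ → Fin n)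
    (hper : IsTilePeriodic τ σ T) (a b : ℕ) :
    ((a : ZMod τ), (b : ZMod σ)) ∈ perLat τ σ T hper ↔ TilePer T a b := by
  constructor
  · intro h
    refine TilePerAux.per_congr hper ?_ ?_ h <;> simp [ZMod.natCast_zmod_val]
  · intro h
    show TilePer T _ _
    refine TilePerAux.per_congr hper ?_ ?_ h <;> simp [ZMod.natCast_zmod_val]

namespace TilePerAux

variable {n τ σ : ℕ} {T : ℕ → ℕ → Fin n}

theorem tcongr (hper : IsTilePeriodic τ σ T) {i j k m : ℕ}
    (h1 : (i : ZMod τ) = (k : ZMod τ)) (h2 : (j : ZMod σ) = (m : ZMod σ)) :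
    T i j = T k m := by
  have e1 : i % τ = k % τ := (ZMod.natCast_eq_natCast_iff _ _ _).mp h1
  have e2 : j % σ = m % σ := (ZMod.natCast_eq_natCast_iff _ _ _).mp h2
  rw [tmod hper i j, tmod hper k m, e1, e2]

theorem succ_eq (hτ : 0 < τ) (hσ : 0 < σ) (hper : IsTilePeriodic τ σ T)
    (hsimple : IsSimpleTile n τ σ T) :
    ∀ i j k m, T i j = T k m → T i (j + 1) = T k (m + 1) := by
  have hsub : tileStates n τ σ T ⊆ (tilePairs n τ σ T).image Prod.fst := by
    intro a ha
    simp only [tileStates, tilePairs, Finset.mem_image, Finset.mem_product,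
      Finset.mem_range] at ha ⊢
    obtain ⟨p, hp, rfl⟩ := ha
    exact ⟨(T p.1 p.2, T p.1 (p.2 + 1)), ⟨p, hp, rfl⟩, rfl⟩
  have hcard : ((tilePairs n τ σ T).image Prod.fst).card = (tilePairs n τ σ T).card := by
    refine le_antisymm Finset.card_image_le ?_
    calc (tilePairs n τ σ T).card = (tileStates n τ σ T).card := hsimple
      _ ≤ ((tilePairs n τ σ T).image Prod.fst).card := Finset.card_le_card hsub
  have hinj : Set.InjOn Prod.fst (tilePairs n τ σ T : Set (Fin n × Fin n)) := Finset.card_image_iff.mp hcard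
  intro i j k m h
  have mpair : ∀ x y : ℕ,
      ((T (x % τ) (y % σ), T (x % τ) (y % σ + 1)) : Fin n × Fin n) ∈ tilePairs n τ σ T := by
    intro x y
    simp only [tilePairs, Finset.mem_image, Finset.mem_product, Finset.mem_range]
    exact ⟨(x % τ, y % σ), ⟨Nat.mod_lt _ hτ, Nat.mod_lt _ hσ⟩, rfl⟩
  have hfst : T (i % τ) (j % σ) = T (k % τ) (m % σ) := by
    rw [← tmod hper, ← tmod hper]; exact h
  have e := hinj (mpair i j) (mpair k m) (by simpa using hfst)
  have e2 : T (i % τ) (j % σ + 1) = T (k % τ) (m % σ + 1) := congrArg Prod.snd e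
  calc T i (j + 1) = T (i % τ) (j % σ + 1) := by
        refine tcongr hper ?_ ?_ <;> push_cast [ZMod.natCast_mod] <;> ring
    _ = T (k % τ) (m % σ + 1) := e2
    _ = T k (m + 1) := by
        refine tcongr hper ?_ ?_ <;> push_cast [ZMod.natCast_mod] <;> ring

variable (hτ : 0 < τ) (hσ : 0 < σ) (hper : IsTilePeriodic τ σ T)
  (hPS : IsPSTile n τ σ T) (hsimple : IsSimpleTile n τ σ T)

theorem det_eq (hσ : 0 < σ) (hPS : IsPSTile n τ σ T)
    (hsucc : ∀ i j k m, T i j = T k m → T i (j + 1) = T k (m + 1)) :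
    ∀ i j k m, T i j = T k m → ∀ a b, T (i + a) (j + b) = T (k + a) (m + b) := by
  obtain ⟨hper, huniq, -, -⟩ := hPS
  have hsuccs : ∀ i j k m, T i j = T k m → ∀ b, T i (j + b) = T k (m + b) := by
    intro i j k m h b
    induction b with
    | zero => simpa using h
    | succ b ih => simpa [← add_assoc] using hsucc _ _ _ _ ih
  have hdiag : ∀ i j k m, T i j = T k m → T (i + 1) (j + 1) = T (k + 1) (m + 1) :=
    fun i j k m h => huniq i j k m h (hsucc _ _ _ _ h)
  have hdown : ∀ i j k m, T i j = T k m → T (i + 1) j = T (k + 1) m := by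
    intro i j k m h
    have h3 := hdiag _ _ _ _ (hsuccs _ _ _ _ h (σ - 1))
    rw [show j + (σ - 1) + 1 = j + σ by omega, show m + (σ - 1) + 1 = m + σ by omega] at h3
    rwa [hper.2, hper.2] at h3
  intro i j k m h a b
  induction a with
  | zero => simpa using hsuccs _ _ _ _ h b
  | succ a ih => simpa [← add_assoc] using hdown _ _ _ _ ih

theorem per_of_pt (hτ : 0 < τ) (hσ : 0 < σ) (hper : IsTilePeriodic τ σ T)
    (hdet : ∀ i j k m, T i j = T k m → ∀ a b, T (i + a) (j + b) = T (k + a) (m + b))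
    {x y a b : ℕ} (h : T (x + a) (y + b) = T x y) : TilePer T a b := by
  obtain ⟨t, ht⟩ : ∃ t, τ = t + 1 := ⟨τ - 1, by omega⟩
  obtain ⟨s, hs⟩ : ∃ s, σ = s + 1 := ⟨σ - 1, by omega⟩
  intro u v
  have h2 := hdet _ _ _ _ h.symm (u + x * t) (v + y * s)
  rw [show x + (u + x * t) = u + x * τ by rw [ht]; ring,
      show y + (v + y * s) = v + y * σ by rw [hs]; ring,
      show x + a + (u + x * t) = u + a + x * τ by rw [ht]; ring,
      show y + b + (v + y * s) = v + b + y * σ by rw [hs]; ring,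
      perV hper, perH hper, perV hper, perH hper] at h2
  exact h2.symm

theorem eq_iff_mem (hτ : 0 < τ) (hσ : 0 < σ) [NeZero τ] [NeZero σ]
    (hper : IsTilePeriodic τ σ T)
    (hdet : ∀ i j k m, T i j = T k m → ∀ a b, T (i + a) (j + b) = T (k + a) (m + b))
    (i j k m : ℕ) :
    T i j = T k m ↔
      (((i : ZMod τ) - (k : ZMod τ), (j : ZMod σ) - (m : ZMod σ)) : ZMod τ × ZMod σ)
        ∈ perLat τ σ T hper := by
  obtain ⟨t, ht⟩ : ∃ t, τ = t + 1 := ⟨τ - 1, by omega⟩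
  obtain ⟨s, hs⟩ : ∃ s, σ = s + 1 := ⟨σ - 1, by omega⟩
  have htz : ((t : ℕ) : ZMod τ) = -1 := by
    have h0 : ((t + 1 : ℕ) : ZMod τ) = 0 := by rw [← ht]; exact ZMod.natCast_self τ
    push_cast at h0
    linear_combination h0
  have hsz : ((s : ℕ) : ZMod σ) = -1 := by
    have h0 : ((s + 1 : ℕ) : ZMod σ) = 0 := by rw [← hs]; exact ZMod.natCast_self σ
    push_cast at h0
    linear_combination h0
  constructor
  · intro h
    have h0 : T (k + (i + k * t)) (m + (j + m * s)) = T k m := by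
      rw [show k + (i + k * t) = i + k * τ by rw [ht]; ring,
          show m + (j + m * s) = j + m * σ by rw [hs]; ring, perV hper, perH hper]
      exact h
    have hp : TilePer T (i + k * t) (j + m * s) := per_of_pt hτ hσ hper hdet h0
    have hmem := (mem_perLat_iff τ σ T hper _ _).mpr hp
    have eA : ((i + k * t : ℕ) : ZMod τ) = (i : ZMod τ) - k := by push_cast [htz]; ring
    have eB : ((j + m * s : ℕ) : ZMod σ) = (j : ZMod σ) - m := by push_cast [hsz]; ring
    rwa [eA, eB] at hmem
  · intro hmem
    have hp : TilePer T ((i : ZMod τ) - (k : ZMod τ)).val ((j : ZMod σ) - (m : ZMod σ)).val :=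
      hmem
    have h1 : T i j = T (k + ((i : ZMod τ) - (k : ZMod τ)).val)
        (m + ((j : ZMod σ) - (m : ZMod σ)).val) := by
      refine tcongr hper ?_ ?_ <;> push_cast [ZMod.natCast_zmod_val] <;> ring
    rw [h1]
    exact hp k m

end TilePerAux

/-- for a simple tile of a periodic solution there is a positive
divisor `d` of `gcd(τ, σ)` such that `s(T) = τσ/d` and every state of `T`
appears in exactly `d` of the `τ` rows and exactly `d` of the `σ` columns. -/
theorem simple_tile_state_count (n τ σ : ℕ) (hτ : 1 ≤ τ) (hσ : 1 ≤ σ)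
    (T : ℕ → ℕ → Fin n) (hT : IsPSTile n τ σ T) (hsimple : IsSimpleTile n τ σ T) :
    ∃ d : ℕ, 0 < d ∧ d ∣ Nat.gcd τ σ ∧
      (tileStates n τ σ T).card = τ * σ / d ∧
      ∀ a ∈ tileStates n τ σ T,
        Nat.card {i : ℕ // i < τ ∧ ∃ j < σ, T i j = a} = d ∧
        Nat.card {j : ℕ // j < σ ∧ ∃ i < τ, T i j = a} = d := by
  classical
  haveI : NeZero τ := ⟨by omega⟩
  haveI : NeZero σ := ⟨by omega⟩
  have hτ0 : 0 < τ := hτ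
  have hσ0 : 0 < σ := hσ
  have hper : IsTilePeriodic τ σ T := hT.1
  have hsucc := TilePerAux.succ_eq hτ0 hσ0 hper hsimple
  have hdet := TilePerAux.det_eq hσ0 hT hsucc
  set Λ := perLat τ σ T hper with hΛdef
  have hiff := TilePerAux.eq_iff_mem hτ0 hσ0 hper hdet
  set d := Nat.card Λ with hddef
  haveI : Nonempty Λ := ⟨0⟩
  have hdpos : 0 < d := Nat.card_pos
  -- kernels of the two projections are trivial
  have kerP : ∀ b : ZMod σ, ((0 : ZMod τ), b) ∈ Λ → b = 0 := by
    intro b hb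
    have hp : TilePer T (0 : ZMod τ).val b.val := hb
    rw [ZMod.val_zero] at hp
    by_contra hb0
    have hσle := hT.2.2.1 0 b.val (ZMod.val_pos.mpr hb0) (fun j => by simpa using hp 0 j)
    have := ZMod.val_lt b
    omega
  have kerQ : ∀ a : ZMod τ, (a, (0 : ZMod σ)) ∈ Λ → a = 0 := by
    intro a hb
    have hp : TilePer T a.val (0 : ZMod σ).val := hb
    rw [ZMod.val_zero] at hp
    by_contra ha0
    have hτle := hT.2.2.2 a.val (ZMod.val_pos.mpr ha0) (fun i j => by simpa using hp i j)
    have := ZMod.val_lt a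
    omega
  have hinjP : Set.InjOn Prod.fst (Λ : Set (ZMod τ × ZMod σ)) := by
    intro p hp q hq hpq
    have hsub : p - q ∈ Λ := Λ.sub_mem hp hq
    have h1 : (p - q).1 = 0 := by
      show p.1 - q.1 = 0
      rw [hpq, sub_self]
    have h2 : p - q = ((0 : ZMod τ), (p - q).2) := Prod.ext h1 rfl
    rw [h2] at hsub
    have h3 : (p - q).2 = 0 := kerP _ hsub
    have : p - q = 0 := Prod.ext h1 h3
    exact sub_eq_zero.mp this
  have hinjQ : Set.InjOn Prod.snd (Λ : Set (ZMod τ × ZMod σ)) := by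
    intro p hp q hq hpq
    have hsub : p - q ∈ Λ := Λ.sub_mem hp hq
    have h1 : (p - q).2 = 0 := by
      show p.2 - q.2 = 0
      rw [hpq, sub_self]
    have h2 : p - q = ((p - q).1, (0 : ZMod σ)) := Prod.ext rfl h1
    rw [h2] at hsub
    have h3 : (p - q).1 = 0 := kerQ _ hsub
    have : p - q = 0 := Prod.ext h3 h1
    exact sub_eq_zero.mp this
  set P := Λ.map (AddMonoidHom.fst (ZMod τ) (ZMod σ)) with hPdef
  set Q := Λ.map (AddMonoidHom.snd (ZMod τ) (ZMod σ)) with hQdef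
  have hPcoe : (P : Set (ZMod τ)) = Prod.fst '' (Λ : Set (ZMod τ × ZMod σ)) := by
    ext x
    simp [hPdef, AddSubgroup.mem_map, Set.mem_image]
  have hQcoe : (Q : Set (ZMod σ)) = Prod.snd '' (Λ : Set (ZMod τ × ZMod σ)) := by
    ext x
    simp [hQdef, AddSubgroup.mem_map, Set.mem_image]
  have hcardP : Nat.card P = d := by
    calc Nat.card P = (P : Set (ZMod τ)).ncard := Nat.card_coe_set_eq _
      _ = (Λ : Set (ZMod τ × ZMod σ)).ncard := by
          rw [hPcoe]; exact Set.ncard_image_of_injOn hinjP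
      _ = d := (Nat.card_coe_set_eq _).symm
  have hcardQ : Nat.card Q = d := by
    calc Nat.card Q = (Q : Set (ZMod σ)).ncard := Nat.card_coe_set_eq _
      _ = (Λ : Set (ZMod τ × ZMod σ)).ncard := by
          rw [hQcoe]; exact Set.ncard_image_of_injOn hinjQ
      _ = d := (Nat.card_coe_set_eq _).symm
  have hdvdτ : d ∣ τ := by
    have h1 : Nat.card P ∣ Nat.card (ZMod τ) := AddSubgroup.card_addSubgroup_dvd_card P
    rwa [hcardP, Nat.card_zmod] at h1
  have hdvdσ : d ∣ σ := by
    have h1 : Nat.card Q ∣ Nat.card (ZMod σ) := AddSubgroup.card_addSubgroup_dvd_card Q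
    rwa [hcardQ, Nat.card_zmod] at h1
  -- the map from the torus to the states
  set Φ : ZMod τ × ZMod σ → Fin n := fun p => T p.1.val p.2.val with hΦdef
  have hΦiff : ∀ p q, Φ p = Φ q ↔ p - q ∈ Λ := by
    intro p q
    have h := hiff p.1.val p.2.val q.1.val q.2.val
    simpa [hΦdef, ZMod.natCast_zmod_val, ← Prod.mk_sub_mk, hΛdef] using h
  have hstates : tileStates n τ σ T = Finset.univ.image Φ := by
    ext a
    simp only [tileStates, Finset.mem_image, Finset.mem_product, Finset.mem_range,
      Finset.mem_univ, true_and]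
    constructor
    · rintro ⟨p, ⟨h1, h2⟩, rfl⟩
      exact ⟨((p.1 : ZMod τ), (p.2 : ZMod σ)), by
        simp [hΦdef, ZMod.val_cast_of_lt h1, ZMod.val_cast_of_lt h2]⟩
    · rintro ⟨p, rfl⟩
      exact ⟨(p.1.val, p.2.val), ⟨ZMod.val_lt _, ZMod.val_lt _⟩, rfl⟩
  have hfiber : ∀ q : ZMod τ × ZMod σ,
      (Finset.univ.filter fun p => Φ p = Φ q).card = d := by
    intro q
    have hΛcard : (Finset.univ.filter fun p : ZMod τ × ZMod σ => p ∈ Λ).card = d := by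
      rw [hddef, Nat.card_eq_fintype_card, Fintype.card_subtype]
    rw [← hΛcard]
    refine Finset.card_bij' (fun p _ => p - q) (fun x _ => x + q) ?_ ?_ ?_ ?_
    · intro p hp
      simp only [Finset.mem_filter, Finset.mem_univ, true_and] at hp ⊢
      exact (hΦiff p q).mp hp
    · intro x hx
      simp only [Finset.mem_filter, Finset.mem_univ, true_and] at hx ⊢
      exact (hΦiff (x + q) q).mpr (by simpa using hx)
    · intro p _; simp
    · intro x _; simp
  have hcount : τ * σ = (Finset.univ.image Φ).card * d := by
    have h1 : (Finset.univ : Finset (ZMod τ × ZMod σ)).card =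
        ∑ a ∈ Finset.univ.image Φ, (Finset.univ.filter fun p => Φ p = a).card :=
      Finset.card_eq_sum_card_image Φ Finset.univ
    have h2 : ∑ a ∈ Finset.univ.image Φ, (Finset.univ.filter fun p => Φ p = a).card =
        (Finset.univ.image Φ).card * d := by
      rw [Finset.sum_congr rfl (fun a ha => ?_), Finset.sum_const, smul_eq_mul]
      obtain ⟨q, -, rfl⟩ := Finset.mem_image.mp ha
      exact hfiber q
    rw [← h2, ← h1, Finset.card_univ, Fintype.card_prod, ZMod.card, ZMod.card]
  have hscard : (tileStates n τ σ T).card = τ * σ / d := by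
    rw [hstates]
    exact (Nat.div_eq_of_eq_mul_left hdpos (by rw [hcount, mul_comm])).symm
  refine ⟨d, hdpos, Nat.dvd_gcd hdvdτ hdvdσ, hscard, ?_⟩
  intro a ha
  rw [hstates] at ha
  obtain ⟨q, -, rfl⟩ := Finset.mem_image.mp ha
  have hrowiff : ∀ i : ℕ, (∃ j < σ, T i j = Φ q) ↔ (i : ZMod τ) - q.1 ∈ P := by
    intro i
    constructor
    · rintro ⟨j, hj, hTij⟩
      have hm := (hiff i j q.1.val q.2.val).mp hTij
      rw [ZMod.natCast_zmod_val, ZMod.natCast_zmod_val] at hm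
      exact AddSubgroup.mem_map.mpr ⟨_, hm, rfl⟩
    · intro hx
      obtain ⟨pr, hpr, hpr1⟩ := AddSubgroup.mem_map.mp hx
      refine ⟨(pr.2 + q.2).val, ZMod.val_lt _, ?_⟩
      refine (hiff _ _ _ _).mpr ?_
      rw [ZMod.natCast_zmod_val, ZMod.natCast_zmod_val, ZMod.natCast_zmod_val]
      have e1 : (pr.2 + q.2 - q.2 : ZMod σ) = pr.2 := by ring
      rw [e1]
      have e2 : (((i : ZMod τ) - q.1, pr.2) : ZMod τ × ZMod σ) = pr :=
        Prod.ext (by rw [← hpr1]; rfl) rfl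
      rw [e2]
      exact hpr
  have hcoliff : ∀ j : ℕ, (∃ i < τ, T i j = Φ q) ↔ (j : ZMod σ) - q.2 ∈ Q := by
    intro j
    constructor
    · rintro ⟨i, hi, hTij⟩
      have hm := (hiff i j q.1.val q.2.val).mp hTij
      rw [ZMod.natCast_zmod_val, ZMod.natCast_zmod_val] at hm
      exact AddSubgroup.mem_map.mpr ⟨_, hm, rfl⟩
    · intro hx
      obtain ⟨pr, hpr, hpr1⟩ := AddSubgroup.mem_map.mp hx
      refine ⟨(pr.1 + q.1).val, ZMod.val_lt _, ?_⟩
      refine (hiff _ _ _ _).mpr ?_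
      rw [ZMod.natCast_zmod_val, ZMod.natCast_zmod_val, ZMod.natCast_zmod_val]
      have e1 : (pr.1 + q.1 - q.1 : ZMod τ) = pr.1 := by ring
      rw [e1]
      have e2 : ((pr.1, (j : ZMod σ) - q.2) : ZMod τ × ZMod σ) = pr :=
        Prod.ext rfl (by rw [← hpr1]; rfl)
      rw [e2]
      exact hpr
  constructor
  · have e1 : {i : ℕ // i < τ ∧ ∃ j < σ, T i j = Φ q} ≃ {x : ZMod τ // x - q.1 ∈ P} :=
      { toFun := fun i => ⟨(i.1 : ZMod τ), (hrowiff i.1).mp i.2.2⟩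
        invFun := fun x => ⟨x.1.val, ZMod.val_lt _,
          (hrowiff _).mpr (by rw [ZMod.natCast_zmod_val]; exact x.2)⟩
        left_inv := fun i => Subtype.ext (ZMod.val_cast_of_lt i.2.1)
        right_inv := fun x => Subtype.ext (ZMod.natCast_zmod_val x.1) }
    have e2 : {x : ZMod τ // x - q.1 ∈ P} ≃ P :=
      (Equiv.subRight q.1).subtypeEquiv fun x => Iff.rfl
    rw [Nat.card_congr (e1.trans e2), hcardP]
  · have e1 : {j : ℕ // j < σ ∧ ∃ i < τ, T i j = Φ q} ≃ {x : ZMod σ // x - q.2 ∈ Q} :=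
      { toFun := fun j => ⟨(j.1 : ZMod σ), (hcoliff j.1).mp j.2.2⟩
        invFun := fun x => ⟨x.1.val, ZMod.val_lt _,
          (hcoliff _).mpr (by rw [ZMod.natCast_zmod_val]; exact x.2)⟩
        left_inv := fun j => Subtype.ext (ZMod.val_cast_of_lt j.2.1)
        right_inv := fun x => Subtype.ext (ZMod.natCast_zmod_val x.1) }
    have e2 : {x : ZMod σ // x - q.2 ∈ Q} ≃ Q :=
      (Equiv.subRight q.2).subtypeEquiv fun x => Iff.rfl
    rw [Nat.card_congr (e1.trans e2), hcardQ]
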